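/- For fixed x > 0, the hypergeometric-type sums S_n(x) = ∑_{k=0}^{⌊n/2⌋-1} ((-4)^k x^{k+1}/(2k+1)!)·((n-2)! (2n-3-2k)!)/((n-2-2k)! (2n-3)!) satisfy lim_{n→∞} S_n(x)/x = sin(√x)/√x. -/

import Mathlib

open Real Filter

/-- The hypergeometric-type sums `S_n(x) = (4n²-1) p_n(x)`, with the Gamma-function ratio
written via falling factorials (terms with `n-2 < 2k` vanish). -/
noncomputable def S (n : ℕ) (x : ℝ) : ℝ :=
  ∑ k ∈ Finset.range (n / 2),
    ((-4 : ℝ)^k * x^(k+1) / ((2*k+1).factorial : ℝ)) *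
      ((Nat.descFactorial (n-2) (2*k) : ℝ) / (Nat.descFactorial (2*n-3) (2*k) : ℝ))

/-- The general term of `S`, extended to all `k : ℕ`. -/
noncomputable def Sterm (x : ℝ) (n k : ℕ) : ℝ :=
  ((-4 : ℝ)^k * x^(k+1) / ((2*k+1).factorial : ℝ)) *
      ((Nat.descFactorial (n-2) (2*k) : ℝ) / (Nat.descFactorial (2*n-3) (2*k) : ℝ))

lemma ratio_nonneg (n k : ℕ) :
    0 ≤ (Nat.descFactorial (n-2) (2*k) : ℝ) / (Nat.descFactorial (2*n-3) (2*k) : ℝ) :=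
  div_nonneg (Nat.cast_nonneg _) (Nat.cast_nonneg _)

lemma ratio_le_one (n k : ℕ) :
    (Nat.descFactorial (n-2) (2*k) : ℝ) / (Nat.descFactorial (2*n-3) (2*k) : ℝ) ≤ 1 := by
  rcases Nat.eq_zero_or_pos (Nat.descFactorial (2*n-3) (2*k)) with h | h
  · simp [h]
  · rw [div_le_one (by exact_mod_cast h)]
    exact_mod_cast Nat.descFactorial_le (2*k) (by omega : n - 2 ≤ 2*n - 3)

lemma aux_tendsto (a b : ℝ) :
    Tendsto (fun n : ℕ => ((n:ℝ) - a)/(2*(n:ℝ) - b)) atTop (nhds (2⁻¹)) := by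
  have h1 : Tendsto (fun n : ℕ => (1 - a/(n:ℝ))/(2 - b/(n:ℝ))) atTop (nhds (2⁻¹)) := by
    have hA : Tendsto (fun n : ℕ => 1 - a/(n:ℝ)) atTop (nhds 1) := by
      simpa using tendsto_const_nhds.sub (tendsto_const_div_atTop_nhds_zero_nat a)
    have hB : Tendsto (fun n : ℕ => 2 - b/(n:ℝ)) atTop (nhds 2) := by
      simpa using tendsto_const_nhds.sub (tendsto_const_div_atTop_nhds_zero_nat b)
    have h := hA.div hB two_ne_zero
    rw [one_div] at h
    exact h
  refine h1.congr' ?_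
  filter_upwards [eventually_ge_atTop 1] with n hn
  have hn0 : (n:ℝ) ≠ 0 := by positivity
  field_simp

lemma ratio_tendsto (k : ℕ) :
    Tendsto (fun n : ℕ =>
      (Nat.descFactorial (n-2) (2*k) : ℝ) / (Nat.descFactorial (2*n-3) (2*k) : ℝ))
      atTop (nhds ((4:ℝ)⁻¹ ^ k)) := by
  have hprod : Tendsto (fun n : ℕ =>
      ∏ i ∈ Finset.range (2*k), (((n:ℝ) - (2 + i))/(2*(n:ℝ) - (3 + i)))) atTop
      (nhds (∏ _i ∈ Finset.range (2*k), (2:ℝ)⁻¹)) := by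
    exact tendsto_finset_prod _ (fun i _ => aux_tendsto (2 + i) (3 + i))
  have hval : (∏ _i ∈ Finset.range (2*k), (2:ℝ)⁻¹) = (4:ℝ)⁻¹ ^ k := by
    rw [Finset.prod_const, Finset.card_range, pow_mul]
    norm_num
  rw [hval] at hprod
  refine hprod.congr' ?_
  filter_upwards [eventually_ge_atTop (2*k + 2)] with n hn
  have h1 : (Nat.descFactorial (n-2) (2*k) : ℝ)
      = ∏ i ∈ Finset.range (2*k), ((n:ℝ) - (2 + i)) := by
    rw [Nat.descFactorial_eq_prod_range, Nat.cast_prod]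
    refine Finset.prod_congr rfl (fun i hi => ?_)
    have hi' : i < 2*k := Finset.mem_range.mp hi
    have : n - 2 - i = n - (2 + i) := by omega
    rw [this, Nat.cast_sub (by omega)]
    push_cast; ring
  have h2 : (Nat.descFactorial (2*n-3) (2*k) : ℝ)
      = ∏ i ∈ Finset.range (2*k), (2*(n:ℝ) - (3 + i)) := by
    rw [Nat.descFactorial_eq_prod_range, Nat.cast_prod]
    refine Finset.prod_congr rfl (fun i hi => ?_)
    have hi' : i < 2*k := Finset.mem_range.mp hi
    have : 2*n - 3 - i = 2*n - (3 + i) := by omega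
    rw [this, Nat.cast_sub (by omega)]
    push_cast; ring
  rw [h1, h2, ← Finset.prod_div_distrib]

lemma Sterm_tendsto (x : ℝ) (k : ℕ) :
    Tendsto (fun n : ℕ => Sterm x n k) atTop
      (nhds ((-1:ℝ)^k * x^(k+1) / ((2*k+1).factorial : ℝ))) := by
  have h := (ratio_tendsto k).const_mul ((-4 : ℝ)^k * x^(k+1) / ((2*k+1).factorial : ℝ))
  have hval : ((-4 : ℝ)^k * x^(k+1) / ((2*k+1).factorial : ℝ)) * ((4:ℝ)⁻¹ ^ k)
      = (-1:ℝ)^k * x^(k+1) / ((2*k+1).factorial : ℝ) := by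
    have : (-4 : ℝ)^k * (4:ℝ)⁻¹ ^ k = (-1:ℝ)^k := by
      rw [← mul_pow]; norm_num
    rw [div_mul_eq_mul_div, mul_right_comm, this]
  rw [hval] at h
  exact h

lemma S_eq_tsum (x : ℝ) {n : ℕ} (hn : 2 ≤ n) : S n x = ∑' k, Sterm x n k := by
  rw [S]
  refine (tsum_eq_sum (L := SummationFilter.unconditional ℕ) ?_).symm
  intro k hk
  have hk' : n / 2 ≤ k := le_of_not_gt (fun h => hk (Finset.mem_range.mpr h))
  have : n - 2 < 2 * k := by omega
  simp [Sterm, Nat.descFactorial_eq_zero_iff_lt.mpr this]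

theorem S_tendsto_sinc (x : ℝ) (hx : 0 < x) :
    Tendsto (fun n : ℕ => S n x / x) atTop
      (nhds (Real.sin (Real.sqrt x) / Real.sqrt x)) := by
  have hsx : (0:ℝ) < Real.sqrt x := Real.sqrt_pos.mpr hx
  have hsx' : Real.sqrt x ≠ 0 := ne_of_gt hsx
  set g : ℕ → ℝ := fun k => (-1:ℝ)^k * x^(k+1) / ((2*k+1).factorial : ℝ) with hg
  -- summable bound
  have hsum : Summable (fun k : ℕ => x * ((4*x)^k / (k.factorial : ℝ))) :=
    (Real.summable_pow_div_factorial (4*x)).mul_left x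
  have hbd : Summable (fun k : ℕ => x^(k+1) * 4^k / ((2*k+1).factorial : ℝ)) := by
    refine hsum.of_nonneg_of_le (fun k => by positivity) (fun k => ?_)
    have h1 : x^(k+1) * 4^k = x * (4*x)^k := by rw [mul_pow]; ring
    rw [h1, mul_div_assoc]
    refine mul_le_mul_of_nonneg_left ?_ hx.le
    refine div_le_div_of_nonneg_left (by positivity) (by positivity) ?_
    exact_mod_cast Nat.factorial_le (by omega : k ≤ 2*k+1)
  have hmain : Tendsto (fun n : ℕ => ∑' k, Sterm x n k) atTop (nhds (∑' k, g k)) := by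
    refine tendsto_tsum_of_dominated_convergence hbd (fun k => Sterm_tendsto x k) ?_
    filter_upwards with n
    intro k
    simp only [Sterm]
    rw [norm_mul]
    have h1 : ‖(-4 : ℝ)^k * x^(k+1) / ((2*k+1).factorial : ℝ)‖
        = x^(k+1) * 4^k / ((2*k+1).factorial : ℝ) := by
      rw [norm_div, norm_mul, norm_pow, norm_pow]
      simp [abs_of_pos hx, abs_of_nonneg (Nat.cast_nonneg _ : (0:ℝ) ≤ _)]
      ring
    rw [h1]
    have h2 : ‖(Nat.descFactorial (n-2) (2*k) : ℝ) / (Nat.descFactorial (2*n-3) (2*k) : ℝ)‖ ≤ 1 := by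
      rw [Real.norm_eq_abs, abs_of_nonneg (ratio_nonneg n k)]
      exact ratio_le_one n k
    calc x^(k+1) * 4^k / ((2*k+1).factorial : ℝ) * ‖_‖
        ≤ x^(k+1) * 4^k / ((2*k+1).factorial : ℝ) * 1 :=
          mul_le_mul_of_nonneg_left h2 (by positivity)
      _ = _ := by rw [mul_one]
  have hS : Tendsto (fun n : ℕ => S n x) atTop (nhds (∑' k, g k)) := by
    refine hmain.congr' ?_
    filter_upwards [eventually_ge_atTop 2] with n hn
    exact (S_eq_tsum x hn).symm
  have hsin : ∑' k, g k = Real.sqrt x * Real.sin (Real.sqrt x) := by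
    rw [Real.sin_eq_tsum, ← tsum_mul_left]
    refine tsum_congr (fun k => ?_)
    have hpow : Real.sqrt x ^ (2*k+1) = Real.sqrt x * x^k := by
      rw [pow_succ, pow_mul, Real.sq_sqrt hx.le, mul_comm]
    have hxe : x^(k+1) = Real.sqrt x * (Real.sqrt x * x^k) := by
      rw [← mul_assoc, Real.mul_self_sqrt hx.le, pow_succ]; ring
    simp only [hg, hpow]
    rw [hxe]; ring
  have hfin : (∑' k, g k) / x = Real.sin (Real.sqrt x) / Real.sqrt x := by
    rw [hsin]
    rw [show x = Real.sqrt x * Real.sqrt x from (Real.mul_self_sqrt hx.le).symm]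
    field_simp
    rw [Real.sqrt_sq hsx.le]
  have := hS.div_const x
  rwa [hfin] at this
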